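/- arXiv:1810.09024 — 11 statements merged into one kernel-verified Lean document; each statement's English description precedes it below -/
import Mathlib

section
/- For every n ≥ 1 there exist k ∈ ℕ and a quantifier-free formula φ in the first-order language of rings with free variables indexed by Fin 1 ⊕ Fin k (a bounded formula with 1 free variable and k extra variables), such that for every field F and every matrix A ∈ M_n(F): A lies in the center of the ring M_n(F) if and only if the existential formula ∃ y₁ … y_k φ(x, y₁, …, y_k) holds at A in the ring M_n(F). In particular, the center of M_n(F) is existentially definable without parameters in the language of rings, uniformly in F. -/
open FirstOrder FirstOrder.Ring

open Matrix Language in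
private theorem center_iff_matrixUnits (n : ℕ) (hn : 0 < n) (F : Type) [Field F]
    (A : Matrix (Fin n) (Fin n) F) :
    A ∈ Set.center (Matrix (Fin n) (Fin n) F) ↔
      ∃ e : Fin n × Fin n → Matrix (Fin n) (Fin n) F,
        (∀ p q : Fin n × Fin n,
            e p * e q = if p.2 = q.1 then e (p.1, q.2) else 0) ∧
        (∑ i : Fin n, e (i, i)) = 1 ∧
        (∀ p, A * e p = e p * A) := by
  haveI : NeZero n := ⟨hn.ne'⟩
  constructor
  · intro hA
    rw [Semigroup.mem_center_iff] at hA
    refine ⟨fun p => single p.1 p.2 1, ?_, ?_, ?_⟩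
    · rintro ⟨i, j⟩ ⟨k, l⟩
      by_cases h : j = k
      · subst h
        simp [single_mul_single_same]
      · simp [h]
    · ext a b
      by_cases hab : a = b
      · subst hab
        simp [Matrix.sum_apply, single, Matrix.one_apply]
      · simp only [Matrix.sum_apply, single, Matrix.one_apply, of_apply, hab, if_false]
        refine Finset.sum_eq_zero fun i _ => ?_
        by_cases hia : i = a
        · subst hia
          simp [fun h => hab h]
        · simp [hia]
    · intro p
      exact (hA _).symm
  · rintro ⟨e, h1, h2, h3⟩
    rw [Semigroup.mem_center_iff]
    -- key computation
    have key : ∀ (X : Matrix (Fin n) (Fin n) F) (i j k l : Fin n),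
        e (k, i) * (∑ p : Fin n × Fin n, X p.1 p.2 • e p) * e (j, l)
          = X i j • e (k, l) := by
      intro X i j k l
      rw [Finset.mul_sum, Finset.sum_mul]
      rw [Finset.sum_eq_single (i, j)]
      · simp [mul_smul_comm, smul_mul_assoc, h1]
      · rintro ⟨a, b⟩ - hab
        simp only [mul_smul_comm, smul_mul_assoc, h1]
        by_cases hia : i = a
        · subst hia
          have hbj : ¬ (b = j) := by
            rintro rfl
            exact hab rfl
          simp [hbj, h1]
        · simp [hia]
      · simp
    have hone : (1 : Matrix (Fin n) (Fin n) F) ≠ 0 := one_ne_zero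
    have hep : ∃ p : Fin n × Fin n, e p ≠ 0 := by
      by_contra h
      push_neg at h
      exact hone (by rw [← h2]; simp [h])
    obtain ⟨⟨k0, l0⟩, hk0⟩ := hep
    let f : Matrix (Fin n) (Fin n) F →ₗ[F] Matrix (Fin n) (Fin n) F :=
      { toFun := fun X => ∑ p : Fin n × Fin n, X p.1 p.2 • e p
        map_add' := by
          intro X Y
          simp [Matrix.add_apply, add_smul, Finset.sum_add_distrib]
        map_smul' := by
          intro c X
          simp [Matrix.smul_apply, smul_smul, Finset.smul_sum] }
    have hinj : Function.Injective f := by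
      rw [injective_iff_map_eq_zero]
      intro X hX
      ext i j
      have := key X i j k0 l0
      rw [show (∑ p : Fin n × Fin n, X p.1 p.2 • e p) = f X from rfl, hX,
        mul_zero, zero_mul] at this
      rcases smul_eq_zero.1 this.symm with h | h
      · simpa using h
      · exact absurd h hk0
    have hsurj : Function.Surjective f := (LinearMap.injective_iff_surjective).1 hinj
    intro B
    obtain ⟨X, rfl⟩ := hsurj B
    show f X * A = A * f X
    simp only [f, LinearMap.coe_mk, AddHom.coe_mk]
    rw [Finset.sum_mul, Finset.mul_sum]
    simp [mul_smul_comm, smul_mul_assoc, h3]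

open Language in
private lemma isQF_foldr_inf {L : Language} {α : Type*} {m : ℕ}
    (l : List (L.BoundedFormula α m)) (h : ∀ ψ ∈ l, ψ.IsQF) :
    (l.foldr (· ⊓ ·) ⊤).IsQF := by
  induction l with
  | nil => exact BoundedFormula.IsQF.top
  | cons a l ih =>
    exact (h a (by simp)).inf (ih fun ψ hψ => h ψ (by simp [hψ]))

open Language in
private lemma isQF_iInf {L : Language} {α β : Type*} {m : ℕ} [Finite β]
    (f : β → L.BoundedFormula α m) (h : ∀ b, (f b).IsQF) :
    (BoundedFormula.iInf f).IsQF := by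
  refine isQF_foldr_inf _ ?_
  intro ψ hψ
  rcases List.mem_map.1 hψ with ⟨b, -, rfl⟩
  exact h b

open Language in
private lemma realize_foldr_add {α : Type*} {R : Type*} [Add R] [Mul R] [Neg R]
    [One R] [Zero R] [CompatibleRing R]
    (l : List (Language.ring.Term α)) (v : α → R) :
    (l.foldr (· + ·) 0).realize v = (l.map (Term.realize v)).sum := by
  induction l with
  | nil => simp
  | cons a l ih => simp [ih]

/-- For every `n ≥ 1` there are `k : ℕ` and a quantifier-free formula `φ` in the
language of rings with free variables indexed by `Fin 1 ⊕ Fin k` such that for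
every field `F` and every `A ∈ M_n(F)`: `A` is in the center of `M_n(F)` iff
`∃ y₁ … y_k, φ(A, y₁, …, y_k)` holds in the ring `M_n(F)`.  I.e. the center of
`M_n(F)` is existentially definable without parameters, uniformly in `F`. -/
theorem center_existentially_definable (n : ℕ) (hn : 0 < n) :
    ∃ (k : ℕ) (φ : Language.ring.Formula (Fin 1 ⊕ Fin k)),
      FirstOrder.Language.BoundedFormula.IsQF φ ∧
      ∀ (F : Type) [Field F],
        ∀ A : Matrix (Fin n) (Fin n) F,
          letI := compatibleRingOfRing (Matrix (Fin n) (Fin n) F)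
          (A ∈ Set.center (Matrix (Fin n) (Fin n) F) ↔
            ∃ y : Fin k → Matrix (Fin n) (Fin n) F,
              φ.Realize (Sum.elim (fun _ => A) y)) := by
  classical
  let tA : Language.ring.Term ((Fin 1 ⊕ Fin (n * n)) ⊕ Fin 0) :=
    Language.Term.var (Sum.inl (Sum.inl 0))
  let tE : Fin n × Fin n → Language.ring.Term ((Fin 1 ⊕ Fin (n * n)) ⊕ Fin 0) :=
    fun p => Language.Term.var (Sum.inl (Sum.inr (finProdFinEquiv p)))
  let φ : Language.ring.Formula (Fin 1 ⊕ Fin (n * n)) :=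
    (Language.BoundedFormula.iInf
        (fun pq : (Fin n × Fin n) × (Fin n × Fin n) =>
          Language.Term.bdEqual (tE pq.1 * tE pq.2)
            (if pq.1.2 = pq.2.1 then tE (pq.1.1, pq.2.2) else 0))) ⊓
      (Language.Term.bdEqual
        (((List.finRange n).map fun i => tE (i, i)).foldr (· + ·) 0) 1) ⊓
      (Language.BoundedFormula.iInf
        (fun p : Fin n × Fin n => Language.Term.bdEqual (tA * tE p) (tE p * tA)))
  refine ⟨n * n, φ, ?_, ?_⟩
  · refine (Language.BoundedFormula.IsQF.inf (Language.BoundedFormula.IsQF.inf ?_ ?_) ?_)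
    · exact isQF_iInf _ fun b => (Language.BoundedFormula.IsAtomic.equal _ _).isQF
    · exact (Language.BoundedFormula.IsAtomic.equal _ _).isQF
    · exact isQF_iInf _ fun b => (Language.BoundedFormula.IsAtomic.equal _ _).isQF
  · intro F _ A
    letI := compatibleRingOfRing (Matrix (Fin n) (Fin n) F)
    have hreal : ∀ y : Fin (n * n) → Matrix (Fin n) (Fin n) F,
        φ.Realize (Sum.elim (fun _ => A) y) ↔
          ((∀ p q : Fin n × Fin n,
              y (finProdFinEquiv p) * y (finProdFinEquiv q) =
                if p.2 = q.1 then y (finProdFinEquiv (p.1, q.2)) else 0) ∧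
          (∑ i : Fin n, y (finProdFinEquiv (i, i))) = 1 ∧
          (∀ p : Fin n × Fin n,
              A * y (finProdFinEquiv p) = y (finProdFinEquiv p) * A)) := by
      intro y
      have hsum : Language.Term.realize
          (Sum.elim (Sum.elim (fun _ => A) y) (default : Fin 0 → _))
          (((List.finRange n).map fun i => tE (i, i)).foldr (· + ·) 0) =
          ∑ i : Fin n, y (finProdFinEquiv (i, i)) := by
        rw [realize_foldr_add, List.map_map, Fin.sum_univ_def]
        rfl
      simp only [φ, Language.Formula.Realize, Language.BoundedFormula.realize_inf,
        Language.BoundedFormula.realize_iInf, Finset.mem_univ, forall_const,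
        Language.BoundedFormula.realize_bdEqual, realize_mul,
        apply_ite (Language.Term.realize (Sum.elim (Sum.elim (fun _ => A) y)
          (default : Fin 0 → Matrix (Fin n) (Fin n) F))),
        realize_zero, Language.Term.realize_var, Sum.elim_inl, Sum.elim_inr, hsum,
        realize_one, tA, tE, Prod.forall]
      tauto
    rw [center_iff_matrixUnits n hn F A]
    constructor
    · rintro ⟨e, h1, h2, h3⟩
      refine ⟨fun m => e (finProdFinEquiv.symm m), (hreal _).2 ⟨?_, ?_, ?_⟩⟩
      · intro p q
        simpa using h1 p q
      · simpa using h2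
      · intro p
        simpa using h3 p
    · rintro ⟨y, hy⟩
      rw [hreal] at hy
      exact ⟨fun p => y (finProdFinEquiv p), hy.1, hy.2.1, hy.2.2⟩
end

section
/- Let F be an infinite field and n ≥ 2. Then the set F·I_n of scalar matrices in M_n(F) is not a finite union of sets of the form {X ∈ M_n(F) : p₁(X) = … = p_r(X) = 0 and q₁(X) ≠ 0, …, q_s(X) ≠ 0}, where the p_i and q_j are univariate polynomials with coefficients in F, evaluated at the matrix X. (Hence the center of M_n(F) is not quantifier-free definable in the ring M_n(F) with parameters from F·I_n.) -/
/-- For an infinite field `F` and `n ≥ 2`, the set `F·I_n` of scalar matrices in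
`M_n(F)` is not a finite union of sets of the form
`{X | p₁(X) = … = p_r(X) = 0 ∧ q₁(X) ≠ 0 ∧ … ∧ q_s(X) ≠ 0}` with the `pᵢ, qⱼ`
univariate polynomials over `F` evaluated at `X`. -/
theorem center_not_qf_definable
    (F : Type*) [Field F] [Infinite F] (n : ℕ) (hn : 2 ≤ n) :
    ¬ ∃ (k : ℕ) (r s : Fin k → ℕ)
        (p : (i : Fin k) → Fin (r i) → Polynomial F)
        (q : (i : Fin k) → Fin (s i) → Polynomial F),
      {X : Matrix (Fin n) (Fin n) F | ∃ c : F, X = c • (1 : Matrix (Fin n) (Fin n) F)} =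
        ⋃ i : Fin k,
          {X : Matrix (Fin n) (Fin n) F |
            (∀ j, Polynomial.aeval X (p i j) = 0) ∧ ∀ j, Polynomial.aeval X (q i j) ≠ 0} := by
  obtain ⟨m, rfl⟩ : ∃ m, n = m + 2 := ⟨n - 2, by omega⟩
  rintro ⟨k, r, s, p, q, hset⟩
  set M := Matrix (Fin (m + 2)) (Fin (m + 2)) F with hM
  have hmem : ∀ c : F, (c • (1 : M)) ∈ ⋃ i, {X : M |
      (∀ j, Polynomial.aeval X (p i j) = 0) ∧ ∀ j, Polynomial.aeval X (q i j) ≠ 0} := by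
    intro c; rw [← hset]; exact ⟨c, rfl⟩
  have hscal : ∀ (c : F) (u : Polynomial F),
      Polynomial.aeval (c • (1 : M)) u = (u.eval c) • (1 : M) := by
    intro c u
    rw [← Algebra.algebraMap_eq_smul_one, Polynomial.aeval_algebraMap_apply_eq_algebraMap_eval,
      Algebra.algebraMap_eq_smul_one]
  choose f hf using fun c => Set.mem_iUnion.mp (hmem c)
  obtain ⟨i, hi⟩ := Finite.exists_infinite_fiber f
  have hfib : (f ⁻¹' {i}).Infinite := Set.infinite_coe_iff.mp hi
  have hone : (1 : M) ≠ 0 := one_ne_zero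
  have hp0 : ∀ j, p i j = 0 := by
    intro j
    apply Polynomial.eq_zero_of_infinite_isRoot
    refine hfib.mono ?_
    intro c hc
    have hfc : f c = i := hc
    have h1 := (hf c).1
    rw [hfc] at h1
    have h2 := h1 j
    rw [hscal] at h2
    rcases smul_eq_zero.mp h2 with h | h
    · exact h
    · exact absurd h hone
  -- pick a point of the fiber
  obtain ⟨c₀, hc₀⟩ := hfib.nonempty
  have hfc₀ : f c₀ = i := hc₀
  have hq0 : ∀ j, (q i j).eval c₀ ≠ 0 := by
    intro j hj
    have h1 := (hf c₀).2
    rw [hfc₀] at h1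
    exact h1 j (by rw [hscal, hj, zero_smul])
  -- the witness matrix
  set E : M := Matrix.single (0 : Fin (m + 2)) 1 1 with hE
  have hE2 : E * E = 0 := by
    rw [hE]
    exact Matrix.single_mul_single_of_ne (α := F) (c := 1) (0 : Fin (m + 2)) 1 0 one_ne_zero 1
  set X : M := c₀ • (1 : M) + E with hX
  have hXE : X - c₀ • (1 : M) = E := by rw [hX, add_sub_cancel_left]
  have hXmem : X ∈ ⋃ i, {X : M |
      (∀ j, Polynomial.aeval X (p i j) = 0) ∧ ∀ j, Polynomial.aeval X (q i j) ≠ 0} := by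
    refine Set.mem_iUnion.mpr ⟨i, ?_, ?_⟩
    · intro j; rw [hp0 j, map_zero]
    · intro j hj
      have hndvd : ¬ (Polynomial.X - Polynomial.C c₀ ∣ q i j) := by
        rw [Polynomial.dvd_iff_isRoot]; exact hq0 j
      have hcop : IsCoprime ((Polynomial.X - Polynomial.C c₀) ^ 2) (q i j) :=
        ((Polynomial.irreducible_X_sub_C c₀).coprime_iff_not_dvd.mpr hndvd).pow_left
      obtain ⟨a, b, hab⟩ := hcop
      have := congrArg (Polynomial.aeval X) hab
      simp only [map_add, map_mul, map_pow, map_sub, Polynomial.aeval_X,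
        Polynomial.aeval_C, map_one, hj, mul_zero, add_zero] at this
      rw [show (algebraMap F M) c₀ = c₀ • (1 : M) from Algebra.algebraMap_eq_smul_one c₀,
        hXE] at this
      rw [sq, hE2, mul_zero] at this
      exact hone this.symm
  rw [← hset] at hXmem
  obtain ⟨c, hc⟩ := hXmem
  have h01 : X 0 1 = 1 := by
    show (c₀ • (1 : M) + E) 0 1 = 1
    rw [Matrix.add_apply, Matrix.smul_apply, Matrix.one_apply_ne (zero_ne_one (α := Fin (m + 2))),
      smul_zero, zero_add, hE, Matrix.single_apply_same]
  rw [hc, Matrix.smul_apply, Matrix.one_apply_ne (zero_ne_one (α := Fin (m + 2))),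
    smul_zero] at h01
  exact zero_ne_one h01
end

section
/- Let K, L, Ω be fields, let U be a ring equipped with a function f : U → U, and let φ : U → M_n(K) and ψ : U → M_n(L) be injective ring homomorphisms such that φ(f(X)) = tr(φ(X))·I_n for all X ∈ U and ψ(f(X)) = tr(ψ(X))·I_n for all X ∈ U. Then: (1) the subring R of U generated by the image of f is commutative, φ(R) ⊆ K·I_n and ψ(R) ⊆ L·I_n; and (2) if ε : K → Ω and δ : L → Ω are ring homomorphisms such that applying ε entrywise to φ(r) gives the same matrix in M_n(Ω) as applying δ entrywise to ψ(r), for every r ∈ R, then for every X ∈ U one has tr of the entrywise image under ε of φ(X) equals tr of the entrywise image under δ of ψ(X). -/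
section Aux

variable {R K : Type*} [Ring R] [Field K] {n : ℕ}

/-- Elements whose image under a ring hom to matrices is scalar form a subring. -/
def scalarPreimage (φ : R →+* Matrix (Fin n) (Fin n) K) : Subring R where
  carrier := {u | ∃ c : K, φ u = c • (1 : Matrix (Fin n) (Fin n) K)}
  zero_mem' := ⟨0, by simp⟩
  one_mem' := ⟨1, by simp⟩
  add_mem' := by
    rintro a b ⟨c, hc⟩ ⟨d, hd⟩
    exact ⟨c + d, by simp [hc, hd, add_smul]⟩
  neg_mem' := by
    rintro a ⟨c, hc⟩
    exact ⟨-c, by simp [hc]⟩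
  mul_mem' := by
    rintro a b ⟨c, hc⟩ ⟨d, hd⟩
    refine ⟨c * d, ?_⟩
    rw [map_mul, hc, hd, smul_mul_smul_comm, one_mul]

lemma aux_scalar (φ : R →+* Matrix (Fin n) (Fin n) K) (f : R → R)
    (hφ : ∀ X : R, φ (f X) = Matrix.trace (φ X) • (1 : Matrix (Fin n) (Fin n) K)) :
    ∀ r ∈ Subring.closure (Set.range f),
      ∃ c : K, φ r = c • (1 : Matrix (Fin n) (Fin n) K) := by
  intro r hr
  have : Subring.closure (Set.range f) ≤ scalarPreimage φ := by
    apply Subring.closure_le.2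
    rintro x ⟨y, rfl⟩
    exact ⟨Matrix.trace (φ y), hφ y⟩
  exact this hr

lemma trace_mapMatrix {Ω : Type*} [Field Ω] (ε : K →+* Ω)
    (A : Matrix (Fin n) (Fin n) K) :
    Matrix.trace (ε.mapMatrix A) = ε (Matrix.trace A) := by
  simp [Matrix.trace, Matrix.diag, RingHom.mapMatrix_apply, map_sum]

lemma mapMatrix_smul_one {Ω : Type*} [Field Ω] (ε : K →+* Ω) (c : K) :
    ε.mapMatrix (c • (1 : Matrix (Fin n) (Fin n) K))
      = ε c • (1 : Matrix (Fin n) (Fin n) Ω) := by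
  ext i j
  simp [RingHom.mapMatrix_apply, Matrix.map_apply, Matrix.one_apply, Matrix.smul_apply,
    smul_eq_mul, mul_ite, mul_one, mul_zero, apply_ite ε]

end Aux

/-- Amalgamation of traces: let `K, L, Ω` be fields, `U` a ring with a function
`f : U → U`, and `φ : U → M_n(K)`, `ψ : U → M_n(L)` injective ring homomorphisms
with `φ (f X) = tr(φ X)·I` and `ψ (f X) = tr(ψ X)·I` for all `X`.  Then the
subring `R` generated by the image of `f` is commutative, `φ(R) ⊆ K·I` and
`ψ(R) ⊆ L·I`; and if `ε : K → Ω`, `δ : L → Ω` are ring homomorphisms with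
`ε(φ r) = δ(ψ r)` (entrywise) for all `r ∈ R`, then
`tr(ε(φ X)) = tr(δ(ψ X))` for every `X ∈ U`. -/
theorem amalgamation_of_traces
    (K L Ω U : Type*) [Field K] [Field L] [Field Ω] [Ring U] (n : ℕ)
    (f : U → U)
    (φ : U →+* Matrix (Fin n) (Fin n) K) (hφinj : Function.Injective φ)
    (ψ : U →+* Matrix (Fin n) (Fin n) L) (hψinj : Function.Injective ψ)
    (hφ : ∀ X : U, φ (f X) = Matrix.trace (φ X) • (1 : Matrix (Fin n) (Fin n) K))
    (hψ : ∀ X : U, ψ (f X) = Matrix.trace (ψ X) • (1 : Matrix (Fin n) (Fin n) L)) :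
    (∀ x ∈ Subring.closure (Set.range f), ∀ y ∈ Subring.closure (Set.range f), x * y = y * x) ∧
    (∀ r ∈ Subring.closure (Set.range f),
      ∃ c : K, φ r = c • (1 : Matrix (Fin n) (Fin n) K)) ∧
    (∀ r ∈ Subring.closure (Set.range f),
      ∃ c : L, ψ r = c • (1 : Matrix (Fin n) (Fin n) L)) ∧
    (∀ (ε : K →+* Ω) (δ : L →+* Ω),
      (∀ r ∈ Subring.closure (Set.range f), ε.mapMatrix (φ r) = δ.mapMatrix (ψ r)) →
      ∀ X : U, Matrix.trace (ε.mapMatrix (φ X)) = Matrix.trace (δ.mapMatrix (ψ X))) := by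
  have hK := aux_scalar φ f hφ
  have hL := aux_scalar ψ f hψ
  refine ⟨?_, hK, hL, ?_⟩
  · intro x hx y hy
    obtain ⟨c, hc⟩ := hK x hx
    obtain ⟨d, hd⟩ := hK y hy
    apply hφinj
    rw [map_mul, map_mul, hc, hd, smul_mul_smul_comm, smul_mul_smul_comm, mul_comm c d]
  · intro ε δ h X
    rw [trace_mapMatrix, trace_mapMatrix]
    rcases Nat.eq_zero_or_pos n with hn | hn
    · subst hn
      simp [Matrix.trace]
    · have hfX := h (f X) (Subring.subset_closure ⟨X, rfl⟩)
      rw [hφ X, hψ X, mapMatrix_smul_one, mapMatrix_smul_one] at hfX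
      have := congrFun (congrFun hfX ⟨0, hn⟩) ⟨0, hn⟩
      simpa [Matrix.one_apply] using this
end

section
/- Let F be a formally real field and let X₁,…,X_d, Y₁,…,Y_d ∈ M_n(F) satisfy tr(w(X₁,…,X_d,X₁ᵀ,…,X_dᵀ)) = tr(w(Y₁,…,Y_d,Y₁ᵀ,…,Y_dᵀ)) for every word w in the 2d letters x₁,…,x_d,x₁ᵗ,…,x_dᵗ. Then for every element p of the free associative F-algebra on 2d generators: if the evaluation of p at (X₁,…,X_d,X₁ᵀ,…,X_dᵀ) is the zero matrix, then the evaluation of p at (Y₁,…,Y_d,Y₁ᵀ,…,Y_dᵀ) is also the zero matrix. -/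
open Matrix

noncomputable def revHom (F : Type*) [Field F] {S : Type*} (g : S → S) :
    FreeAlgebra F S →ₐ[F] (FreeAlgebra F S)ᵐᵒᵖ :=
  FreeAlgebra.lift F (fun s => MulOpposite.op (FreeAlgebra.ι F (g s)))

lemma lift_rev {F : Type*} [Field F] {S : Type*} {n : ℕ} (g : S → S)
    (A : S → Matrix (Fin n) (Fin n) F) (hg : ∀ s, A (g s) = (A s)ᵀ)
    (p : FreeAlgebra F S) :
    FreeAlgebra.lift F A ((revHom F g p).unop) = (FreeAlgebra.lift F A p)ᵀ := by
  induction p using FreeAlgebra.induction with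
  | grade0 r =>
      simp [revHom, Matrix.algebraMap_eq_diagonal, Matrix.diagonal_transpose]
  | grade1 x => simp [revHom, hg]
  | add a b ha hb => simp [map_add, MulOpposite.unop_add, ha, hb]
  | mul a b ha hb =>
      simp only [_root_.map_mul, MulOpposite.unop_mul, ha, hb, Matrix.transpose_mul]

lemma lift_factor {F : Type*} [Field F] {S : Type*} {n : ℕ}
    (A : S → Matrix (Fin n) (Fin n) F) :
    (FreeAlgebra.lift F A : FreeAlgebra F S →ₐ[F] Matrix (Fin n) (Fin n) F) =
      ((MonoidAlgebra.lift F _ (FreeMonoid S) (FreeMonoid.lift A)).comp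
        FreeAlgebra.equivMonoidAlgebraFreeMonoid.toAlgHom) := by
  apply FreeAlgebra.hom_ext
  funext x
  simp [FreeAlgebra.equivMonoidAlgebraFreeMonoid]

lemma trace_lift_eq {F : Type*} [Field F] {S : Type*} {n : ℕ}
    (A B : S → Matrix (Fin n) (Fin n) F)
    (h : ∀ w : FreeMonoid S,
      Matrix.trace (FreeMonoid.lift A w) = Matrix.trace (FreeMonoid.lift B w))
    (p : FreeAlgebra F S) :
    Matrix.trace (FreeAlgebra.lift F A p) = Matrix.trace (FreeAlgebra.lift F B p) := by
  rw [lift_factor A, lift_factor B]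
  simp only [AlgHom.comp_apply, AlgEquiv.toAlgHom_eq_coe, AlgHom.coe_coe]
  set f := FreeAlgebra.equivMonoidAlgebraFreeMonoid p
  rw [MonoidAlgebra.lift_apply, MonoidAlgebra.lift_apply]
  rw [Finsupp.sum, Finsupp.sum, Matrix.trace_sum, Matrix.trace_sum]
  refine Finset.sum_congr rfl fun w _ => ?_
  rw [Matrix.trace_smul, Matrix.trace_smul, h w]

/-- Over a formally real field `F`, if the tuples `(X, Xᵀ)` and `(Y, Yᵀ)` satisfy
the same trace identities for all words, then every noncommutative polynomial
vanishing at `(X, Xᵀ)` also vanishes at `(Y, Yᵀ)`. -/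
theorem trace_words_eq_implies_polynomial_transfer
    (F : Type*) [Field F]
    (hreal : ∀ (m : ℕ) (a : Fin m → F), (∑ i, (a i) ^ 2) = 0 → ∀ i, a i = 0)
    (n d : ℕ) (X Y : Fin d → Matrix (Fin n) (Fin n) F)
    (htr : ∀ w : FreeMonoid (Fin d ⊕ Fin d),
      Matrix.trace (FreeMonoid.lift (Sum.elim X (fun i => (X i)ᵀ)) w) =
      Matrix.trace (FreeMonoid.lift (Sum.elim Y (fun i => (Y i)ᵀ)) w)) :
    ∀ p : FreeAlgebra F (Fin d ⊕ Fin d),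
      FreeAlgebra.lift F (Sum.elim X (fun i => (X i)ᵀ)) p = 0 →
      FreeAlgebra.lift F (Sum.elim Y (fun i => (Y i)ᵀ)) p = 0 := by
  intro p hp
  set A := Sum.elim X (fun i => (X i)ᵀ) with hA
  set B := Sum.elim Y (fun i => (Y i)ᵀ) with hB
  have hgA : ∀ s, A (Sum.swap s) = (A s)ᵀ := by
    rintro (i | i) <;> simp [hA]
  have hgB : ∀ s, B (Sum.swap s) = (B s)ᵀ := by
    rintro (i | i) <;> simp [hB]
  set q := p * (revHom F Sum.swap p).unop with hq
  have hAq : FreeAlgebra.lift F A q = 0 := by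
    rw [hq, _root_.map_mul, lift_rev _ A hgA, hp]
    simp
  have htrB : Matrix.trace (FreeAlgebra.lift F B q) = 0 := by
    rw [← trace_lift_eq A B htr, hAq, Matrix.trace_zero]
  set M := FreeAlgebra.lift F B p with hM
  have hBq : FreeAlgebra.lift F B q = M * Mᵀ := by
    rw [hq, _root_.map_mul, lift_rev _ B hgB]
  rw [hBq] at htrB
  have hsum : ∑ k : Fin (n * n), (M (finProdFinEquiv.symm k).1 (finProdFinEquiv.symm k).2) ^ 2 = 0 := by
    have e1 : ∑ k : Fin (n * n), (M (finProdFinEquiv.symm k).1 (finProdFinEquiv.symm k).2) ^ 2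
        = ∑ pr : Fin n × Fin n, (M pr.1 pr.2) ^ 2 :=
      Fintype.sum_equiv finProdFinEquiv.symm _ _ (fun k => rfl)
    rw [e1, ← htrB]
    simp [Matrix.trace, Matrix.mul_apply, Matrix.diag, sq, Fintype.sum_prod_type]
  have := hreal (n * n) _ hsum
  ext i j
  have h0 := this (finProdFinEquiv (i, j))
  simpa using h0
end

section
/- Let K be a field, n ≥ 1, and let Z ∈ M_n(K) be invertible. Suppose that Z⁻¹·Xᵀ·Z = (Z⁻¹·X·Z)ᵀ for every X ∈ M_n(K). Then there exists λ ∈ K such that Z·Zᵀ = λ·I_n; moreover λ ≠ 0 and λ is a sum of squares in K. -/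
open Matrix

/-- If `Z ∈ M_n(K)` is invertible and conjugation by `Z` commutes with
transposition, i.e. `Z⁻¹·Xᵀ·Z = (Z⁻¹·X·Z)ᵀ` for all `X`, then `Z·Zᵀ = λ·I_n`
for some `λ ∈ K` which is nonzero and a sum of squares in `K`. -/
theorem conj_commutes_transpose_implies_ZZt_scalar
    (K : Type*) [Field K] (n : ℕ) (hn : 0 < n)
    (Z : Matrix (Fin n) (Fin n) K) (hZ : IsUnit Z)
    (h : ∀ X : Matrix (Fin n) (Fin n) K, Z⁻¹ * Xᵀ * Z = (Z⁻¹ * X * Z)ᵀ) :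
    ∃ l : K, Z * Zᵀ = l • (1 : Matrix (Fin n) (Fin n) K) ∧ l ≠ 0 ∧
      ∃ (m : ℕ) (a : Fin m → K), l = ∑ i, (a i) ^ 2 := by
  have hdet : IsUnit Z.det := (Matrix.isUnit_iff_isUnit_det Z).mp hZ
  have hdetT : IsUnit Zᵀ.det := by rwa [Matrix.det_transpose]
  have hZt : IsUnit Zᵀ := (Matrix.isUnit_iff_isUnit_det _).mpr hdetT
  have hcomm : ∀ X : Matrix (Fin n) (Fin n) K, Commute X (Z * Zᵀ) := by
    intro X
    have hx := h Xᵀ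
    rw [transpose_transpose, transpose_mul, transpose_mul, transpose_transpose,
      transpose_nonsing_inv] at hx
    have h1 : X * Z = Z * (Zᵀ * X * (Zᵀ)⁻¹) := by
      calc X * Z = Z * (Z⁻¹ * X * Z) := by
            rw [← mul_assoc, ← mul_assoc, Matrix.mul_nonsing_inv _ hdet, one_mul]
        _ = Z * (Zᵀ * X * (Zᵀ)⁻¹) := by rw [hx]; simp [mul_assoc]
    have h2 : X * (Z * Zᵀ) = Z * Zᵀ * X := by
      calc X * (Z * Zᵀ) = (X * Z) * Zᵀ := by rw [mul_assoc]
        _ = Z * (Zᵀ * X * (Zᵀ)⁻¹) * Zᵀ := by rw [h1]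
        _ = Z * Zᵀ * X * ((Zᵀ)⁻¹ * Zᵀ) := by simp [mul_assoc]
        _ = Z * Zᵀ * X := by
            rw [Matrix.nonsing_inv_mul _ hdetT, mul_one]
    exact h2
  obtain ⟨r, hr⟩ := Matrix.mem_range_scalar_of_commute_single
    (M := Z * Zᵀ) (fun i j _ => hcomm _)
  have hr' : Z * Zᵀ = r • (1 : Matrix (Fin n) (Fin n) K) := by
    rw [← hr]; ext i j; simp [Matrix.scalar, Matrix.one_apply, Matrix.diagonal]
  refine ⟨r, hr', ?_, n, fun j => Z ⟨0, hn⟩ j, ?_⟩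
  · intro h0
    have hu : IsUnit (Z * Zᵀ) := hZ.mul hZt
    rw [hr', h0, zero_smul] at hu
    have := (Matrix.isUnit_iff_isUnit_det _).mp hu
    rw [@Matrix.det_zero _ _ _ _ _ (Fin.pos_iff_nonempty.mp hn)] at this
    exact this.ne_zero rfl
  · have := congrArg (fun M => M ⟨0, hn⟩ ⟨0, hn⟩) hr'
    simp [Matrix.mul_apply, Matrix.one_apply] at this
    rw [← this]
    simp [sq]
end

section
/- Let F be an infinite field, K a field extension of F, n, d ≥ 1, and X₁,…,X_d, Y₁,…,Y_d ∈ M_n(F). If there exists an invertible matrix P ∈ M_n(K) such that P·X_i = Y_i·P and P·X_iᵀ = Y_iᵀ·P for all i = 1,…,d, then there exists an invertible matrix P ∈ M_n(F) satisfying P·X_i = Y_i·P and P·X_iᵀ = Y_iᵀ·P for all i = 1,…,d. -/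
open Matrix

/-- Descent of simultaneous similarity (respecting transposes): if two tuples of
matrices over an infinite field `F` are intertwined by an invertible matrix over
a field extension `K` of `F`, then they are intertwined by an invertible matrix
over `F` itself. -/
theorem simultaneous_similarity_descends
    (F K : Type*) [Field F] [Infinite F] [Field K] [Algebra F K]
    (n d : ℕ) (hn : 0 < n) (hd : 0 < d)
    (X Y : Fin d → Matrix (Fin n) (Fin n) F)
    (hK : ∃ P : Matrix (Fin n) (Fin n) K, IsUnit P ∧
      ∀ i, P * (algebraMap F K).mapMatrix (X i) = (algebraMap F K).mapMatrix (Y i) * P ∧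
        P * ((algebraMap F K).mapMatrix (X i))ᵀ = ((algebraMap F K).mapMatrix (Y i))ᵀ * P) :
    ∃ P : Matrix (Fin n) (Fin n) F, IsUnit P ∧
      ∀ i, P * X i = Y i * P ∧ P * (X i)ᵀ = (Y i)ᵀ * P := by
  classical
  obtain ⟨P, hPu, hP⟩ := hK
  set A : F →+* K := algebraMap F K with hA
  -- The F-vector space of F-solutions
  let V : Submodule F (Matrix (Fin n) (Fin n) F) :=
    { carrier := {Q | ∀ i, Q * X i = Y i * Q ∧ Q * (X i)ᵀ = (Y i)ᵀ * Q}
      add_mem' := by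
        intro a b ha hb i
        exact ⟨by rw [add_mul, mul_add, (ha i).1, (hb i).1],
          by rw [add_mul, mul_add, (ha i).2, (hb i).2]⟩
      zero_mem' := by intro i; simp
      smul_mem' := by
        intro r a ha i
        exact ⟨by rw [Matrix.smul_mul, Matrix.mul_smul, (ha i).1],
          by rw [Matrix.smul_mul, Matrix.mul_smul, (ha i).2]⟩ }
  let b := Module.Basis.ofVectorSpace F K
  -- entrywise coordinate extraction
  let Q : Module.Basis.ofVectorSpaceIndex F K → Matrix (Fin n) (Fin n) F :=
    fun α => Matrix.of fun a c => b.coord α (P a c)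
  have key : ∀ (α) (Z W : Matrix (Fin n) (Fin n) F),
      P * Z.map A = W.map A * P → Q α * Z = W * Q α := by
    intro α Z W h
    ext a c
    have h1 : b.coord α ((P * Z.map A) a c) = b.coord α ((W.map A * P) a c) := by rw [h]
    simp only [Matrix.mul_apply, Matrix.map_apply] at h1
    have hl : b.coord α (∑ k, P a k * A (Z k c)) = ∑ k, b.coord α (P a k) * Z k c := by
      rw [map_sum]
      refine Finset.sum_congr rfl fun k _ => ?_
      rw [mul_comm, ← Algebra.smul_def, LinearMap.map_smul, smul_eq_mul, mul_comm]
    have hr : b.coord α (∑ k, A (W a k) * P k c) = ∑ k, W a k * b.coord α (P k c) := by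
      rw [map_sum]
      refine Finset.sum_congr rfl fun k _ => ?_
      rw [← Algebra.smul_def (W a k) (P k c), LinearMap.map_smul, smul_eq_mul]
    simp only [Matrix.mul_apply, Q, Matrix.of_apply]
    rw [hl, hr] at h1
    exact h1
  have hQV : ∀ α, Q α ∈ V := by
    intro α i
    refine ⟨key α (X i) (Y i) ?_, key α (X i)ᵀ (Y i)ᵀ ?_⟩
    · exact (hP i).1
    · have := (hP i).2
      simpa only [RingHom.mapMatrix_apply, Matrix.transpose_map] using this
  -- P is a finite K-combination of the (Q α).map A
  let s : Finset (Module.Basis.ofVectorSpaceIndex F K) :=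
    Finset.univ.biUnion fun p : Fin n × Fin n => (b.repr (P p.1 p.2)).support
  have hPsum : P = ∑ α ∈ s, (α : K) • (Q α).map A := by
    ext a c
    have hsupp : (b.repr (P a c)).support ⊆ s := by
      intro α hα
      exact Finset.mem_biUnion.2 ⟨(a, c), Finset.mem_univ _, hα⟩
    have h2 : P a c = ∑ α ∈ s, (b.repr (P a c)) α • b α := by
      conv_lhs => rw [← b.linearCombination_repr (P a c)]
      rw [Finsupp.linearCombination_apply]
      exact Finsupp.sum_of_support_subset _ hsupp _ (by simp)
    symm
    calc ((∑ α ∈ s, (α : K) • (Q α).map A) a c)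
        = ∑ α ∈ s, (α : K) * A (b.repr (P a c) α) := by
          simp [Matrix.sum_apply, Q, Module.Basis.coord_apply, smul_eq_mul]
      _ = ∑ α ∈ s, (b.repr (P a c)) α • b α := by
          refine Finset.sum_congr rfl fun α _ => ?_
          rw [Module.Basis.coe_ofVectorSpace, Algebra.smul_def, mul_comm]
      _ = P a c := h2.symm
  -- basis of V
  have : FiniteDimensional F (Matrix (Fin n) (Fin n) F) := by infer_instance
  let m := Module.finrank F V
  let e : Module.Basis (Fin m) F V := Module.finBasis F V
  let e' : Fin m → Matrix (Fin n) (Fin n) F := fun j => (e j : Matrix (Fin n) (Fin n) F)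
  have he'V : ∀ j, e' j ∈ V := fun j => (e j).2
  -- P lies in the K-span of the (e' j).map A
  have hPspan : P ∈ Submodule.span K (Set.range fun j => (e' j).map A) := by
    rw [hPsum]
    refine Submodule.sum_mem _ fun α _ => Submodule.smul_mem _ _ ?_
    -- (Q α).map A is in the span
    have hrepr : (⟨Q α, hQV α⟩ : V) = ∑ j, e.repr ⟨Q α, hQV α⟩ j • e j := by
      exact (e.sum_repr _).symm
    have : Q α = ∑ j, e.repr ⟨Q α, hQV α⟩ j • e' j := by
      have := congrArg (Subtype.val) hrepr
      simpa only [Submodule.coe_sum, Submodule.coe_smul, e'] using this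
    rw [this]
    rw [show ((∑ j, e.repr ⟨Q α, hQV α⟩ j • e' j).map A)
        = ∑ j, A (e.repr ⟨Q α, hQV α⟩ j) • (e' j).map A by
      ext a c
      simp only [Matrix.map_apply, Matrix.sum_apply, Matrix.smul_apply, smul_eq_mul,
        map_sum, _root_.map_mul]]
    exact Submodule.sum_mem _ fun j _ => Submodule.smul_mem _ _
      (Submodule.subset_span ⟨j, rfl⟩)
  obtain ⟨g, hg⟩ := (Submodule.mem_span_range_iff_exists_fun K).1 hPspan
  -- the determinant polynomial
  let Mp : Matrix (Fin n) (Fin n) (MvPolynomial (Fin m) F) :=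
    ∑ j, (MvPolynomial.X j : MvPolynomial (Fin m) F) • (e' j).map (MvPolynomial.C (σ := Fin m))
  let f : MvPolynomial (Fin m) F := Mp.det
  have heval : ∀ t : Fin m → F, MvPolynomial.eval t f = (∑ j, t j • e' j).det := by
    intro t
    rw [show MvPolynomial.eval t f = (Mp.map (MvPolynomial.eval t)).det from
      RingHom.map_det _ _]
    congr 1
    ext a c
    simp [Mp, Matrix.sum_apply, Matrix.map_apply, smul_eq_mul]
  have haeval : (MvPolynomial.aeval g : MvPolynomial (Fin m) F →ₐ[F] K) f = P.det := by
    rw [show (MvPolynomial.aeval g : MvPolynomial (Fin m) F →ₐ[F] K) f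
        = (Mp.map (MvPolynomial.aeval g)).det from AlgHom.map_det _ _]
    rw [← hg]
    congr 1
    ext a c
    simp [Mp, Matrix.sum_apply, Matrix.map_apply, smul_eq_mul, MvPolynomial.algebraMap_eq, hA]
  have hdetP : P.det ≠ 0 := by
    have := hPu.map (Matrix.detMonoidHom (n := Fin n) (R := K))
    simpa [isUnit_iff_ne_zero] using this
  have hf : f ≠ 0 := by
    intro h0
    rw [h0] at haeval
    simp at haeval
    exact hdetP haeval.symm
  have hft : ∃ t : Fin m → F, MvPolynomial.eval t f ≠ 0 := by
    by_contra h
    push_neg at h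
    exact hf (MvPolynomial.funext fun t => by rw [h t]; simp)
  obtain ⟨t, ht⟩ := hft
  refine ⟨∑ j, t j • e' j, ?_, ?_⟩
  · rw [heval] at ht
    exact (Matrix.isUnit_iff_isUnit_det _).2 (isUnit_iff_ne_zero.2 ht)
  · have : (∑ j, t j • e' j) ∈ V :=
      Submodule.sum_mem _ fun j _ => Submodule.smul_mem _ _ (he'V j)
    exact this
end

section
/- Let n, d ≥ 1 and X₁,…,X_d, Y₁,…,Y_d ∈ M_n(ℝ). Suppose there exists an invertible matrix P ∈ M_n(ℝ) such that P⁻¹·X_i·P = Y_i and P⁻¹·X_iᵀ·P = Y_iᵀ for all i = 1,…,d. Then there exists an orthogonal matrix O ∈ M_n(ℝ) (i.e. O·Oᵀ = I_n) such that Oᵀ·X_i·O = Y_i for all i = 1,…,d. -/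
open Matrix

namespace Matrix.PosSemidef

noncomputable def sqrt {n : ℕ} {A : Matrix (Fin n) (Fin n) ℝ} (hA : A.PosSemidef) :
    Matrix (Fin n) (Fin n) ℝ :=
  (hA.1.eigenvectorUnitary : Matrix (Fin n) (Fin n) ℝ) *
    diagonal ((↑) ∘ Real.sqrt ∘ hA.1.eigenvalues) *
    (star hA.1.eigenvectorUnitary : Matrix (Fin n) (Fin n) ℝ)

lemma posSemidef_sqrt {n : ℕ} {A : Matrix (Fin n) (Fin n) ℝ} (hA : A.PosSemidef) :
    hA.sqrt.PosSemidef := by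
  have hd : (diagonal ((↑) ∘ Real.sqrt ∘ hA.1.eigenvalues) :
      Matrix (Fin n) (Fin n) ℝ).PosSemidef := by
    rw [posSemidef_diagonal_iff]
    intro i
    exact Real.sqrt_nonneg _
  have := hd.mul_mul_conjTranspose_same (hA.1.eigenvectorUnitary : Matrix (Fin n) (Fin n) ℝ)
  simpa [sqrt, star_eq_conjTranspose] using this

lemma sqrt_mul_self {n : ℕ} {A : Matrix (Fin n) (Fin n) ℝ} (hA : A.PosSemidef) :
    hA.sqrt * hA.sqrt = A := by
  set U : Matrix (Fin n) (Fin n) ℝ := (hA.1.eigenvectorUnitary : Matrix (Fin n) (Fin n) ℝ)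
  have hU1 : star U * U = 1 := Unitary.coe_star_mul_self _
  have hspec : A = U * diagonal (RCLike.ofReal ∘ hA.1.eigenvalues) * star U :=
    hA.1.spectral_theorem
  have hEE : (diagonal ((↑) ∘ Real.sqrt ∘ hA.1.eigenvalues) : Matrix (Fin n) (Fin n) ℝ) *
      diagonal ((↑) ∘ Real.sqrt ∘ hA.1.eigenvalues) =
      diagonal (RCLike.ofReal ∘ hA.1.eigenvalues) := by
    rw [diagonal_mul_diagonal]
    congr 1
    funext i
    simp only [Function.comp, RCLike.ofReal_real_eq_id, id]
    exact Real.mul_self_sqrt (hA.eigenvalues_nonneg i)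
  set E : Matrix (Fin n) (Fin n) ℝ := diagonal ((↑) ∘ Real.sqrt ∘ hA.1.eigenvalues)
  show U * E * star U * (U * E * star U) = A
  calc U * E * star U * (U * E * star U) = U * (E * E) * star U := by
        simp only [mul_assoc]
        rw [← mul_assoc (star U) U, hU1, one_mul]
    _ = A := by rw [hEE]; exact hspec.symm

end Matrix.PosSemidef

/-- If `B` commutes with a positive semidefinite real matrix `A`, then `B`
commutes with the positive semidefinite square root of `A`. -/
lemma commute_sqrt_aux {n : ℕ} {A : Matrix (Fin n) (Fin n) ℝ} (hA : A.PosSemidef)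
    {B : Matrix (Fin n) (Fin n) ℝ} (hB : B * A = A * B) :
    B * hA.sqrt = hA.sqrt * B := by
  set U : Matrix (Fin n) (Fin n) ℝ := (hA.1.eigenvectorUnitary : Matrix (Fin n) (Fin n) ℝ) with hU
  have hU1 : star U * U = 1 := Unitary.coe_star_mul_self _
  have hU2 : U * star U = 1 := Unitary.coe_mul_star_self _
  set D : Matrix (Fin n) (Fin n) ℝ := diagonal (RCLike.ofReal ∘ hA.1.eigenvalues) with hD
  set E : Matrix (Fin n) (Fin n) ℝ := diagonal ((↑) ∘ Real.sqrt ∘ hA.1.eigenvalues) with hE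
  have hspec : A = U * D * star U := hA.1.spectral_theorem
  have hsqrt : hA.sqrt = U * E * star U := rfl
  have key : ∀ F G : Matrix (Fin n) (Fin n) ℝ,
      (U * F * star U) * (U * G * star U) = U * (F * G) * star U := by
    intro F G
    simp only [mul_assoc]
    rw [← mul_assoc (star U) U (G * star U), hU1, one_mul]
  have hUD : U * D = A * U := by
    calc U * D = U * D * (star U * U) := by rw [hU1, mul_one]
    _ = (U * D * star U) * U := by simp only [mul_assoc]
    _ = A * U := by rw [← hspec]
  have hDU : D * star U = star U * A := by
    calc D * star U = (star U * U) * (D * star U) := by rw [hU1, one_mul]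
    _ = star U * (U * D * star U) := by simp only [mul_assoc]
    _ = star U * A := by rw [← hspec]
  set C : Matrix (Fin n) (Fin n) ℝ := star U * B * U with hC
  have hCD : C * D = D * C := by
    rw [hC]
    calc star U * B * U * D
        = star U * B * (U * D) := by rw [mul_assoc]
      _ = star U * B * (A * U) := by rw [hUD]
      _ = star U * (B * A) * U := by rw [← mul_assoc, mul_assoc (star U) B A]
      _ = star U * (A * B) * U := by rw [hB]
      _ = star U * A * (B * U) := by rw [← mul_assoc (star U) A B, mul_assoc]
      _ = D * star U * (B * U) := by rw [← hDU]
      _ = D * (star U * B * U) := by rw [mul_assoc, ← mul_assoc (star U) B U]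
  have hCE : C * E = E * C := by
    ext i j
    have h1 := congrFun (congrFun hCD i) j
    simp only [hD, mul_diagonal, diagonal_mul, Function.comp,
      RCLike.ofReal_real_eq_id, id] at h1
    simp only [hE, mul_diagonal, diagonal_mul, Function.comp, RCLike.ofReal_real_eq_id, id]
    rcases eq_or_ne (C i j) 0 with h | h
    · simp [h]
    · have heq : hA.1.eigenvalues j = hA.1.eigenvalues i := by
        have h2 : C i j * hA.1.eigenvalues j = C i j * hA.1.eigenvalues i := by
          rw [h1]; ring
        exact mul_left_cancel₀ h h2
      rw [heq]; ring
  have hBC : B = U * C * star U := by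
    rw [hC]
    calc B = 1 * B * 1 := by rw [one_mul, mul_one]
    _ = (U * star U) * B * (U * star U) := by rw [hU2]
    _ = U * (star U * B * U) * star U := by simp only [mul_assoc]
  rw [hsqrt, hBC, key, key, hCE]

/-- If two tuples of real matrices are simultaneously similar by an invertible
matrix compatibly with transposes, then they are simultaneously orthogonally
similar. -/
theorem similar_with_transposes_implies_orthogonally_similar
    (n d : ℕ) (hn : 0 < n) (hd : 0 < d)
    (X Y : Fin d → Matrix (Fin n) (Fin n) ℝ)
    (hP : ∃ P : Matrix (Fin n) (Fin n) ℝ, IsUnit P ∧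
      ∀ i, P⁻¹ * X i * P = Y i ∧ P⁻¹ * (X i)ᵀ * P = (Y i)ᵀ) :
    ∃ O : Matrix (Fin n) (Fin n) ℝ, O * Oᵀ = 1 ∧ ∀ i, Oᵀ * X i * O = Y i := by
  obtain ⟨P, hPu, h⟩ := hP
  have hPdet : IsUnit P.det := (isUnit_iff_isUnit_det P).mp hPu
  have hPtdet : IsUnit Pᵀ.det := by rwa [det_transpose]
  have hPP : P * P⁻¹ = 1 := mul_nonsing_inv P hPdet
  have hPP' : P⁻¹ * P = 1 := nonsing_inv_mul P hPdet
  set A : Matrix (Fin n) (Fin n) ℝ := Pᵀ * P with hAdef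
  have hA : A.PosSemidef := by
    have := posSemidef_conjTranspose_mul_self P
    rwa [conjTranspose_eq_transpose_of_trivial] at this
  -- basic consequences of the similarity
  have hXP : ∀ i, X i * P = P * Y i := by
    intro i
    calc X i * P = P * (P⁻¹ * X i * P) := by
          simp only [← mul_assoc, hPP, one_mul]
    _ = P * Y i := by rw [(h i).1]
  have hPtX : ∀ i, Pᵀ * X i = Y i * Pᵀ := by
    intro i
    have := congrArg Matrix.transpose (h i).2
    simp only [transpose_mul, transpose_transpose] at this
    have h2 : Pᵀ * X i * (Pᵀ)⁻¹ = Y i := by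
      rw [← transpose_nonsing_inv]
      simpa [mul_assoc] using this
    calc Pᵀ * X i = Pᵀ * X i * ((Pᵀ)⁻¹ * Pᵀ) := by
          rw [nonsing_inv_mul _ hPtdet, mul_one]
    _ = (Pᵀ * X i * (Pᵀ)⁻¹) * Pᵀ := by simp only [mul_assoc]
    _ = Y i * Pᵀ := by rw [h2]
  have hcomm : ∀ i, Y i * A = A * Y i := by
    intro i
    calc Y i * A = (Y i * Pᵀ) * P := by rw [hAdef, mul_assoc]
    _ = Pᵀ * X i * P := by rw [← hPtX]
    _ = Pᵀ * (P * Y i) := by rw [mul_assoc, hXP]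
    _ = A * Y i := by rw [hAdef, mul_assoc]
  set S : Matrix (Fin n) (Fin n) ℝ := hA.sqrt with hSdef
  have hS2 : S * S = A := hA.sqrt_mul_self
  have hSsym : Sᵀ = S := by
    have := hA.posSemidef_sqrt.1
    rwa [IsHermitian, conjTranspose_eq_transpose_of_trivial] at this
  have hSdet : IsUnit S.det := by
    have hAdet : IsUnit A.det := by
      rw [hAdef, det_mul]
      exact hPtdet.mul hPdet
    rw [← hS2, det_mul] at hAdet
    exact isUnit_of_mul_isUnit_left hAdet
  have hSS : S * S⁻¹ = 1 := mul_nonsing_inv S hSdet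
  have hSS' : S⁻¹ * S = 1 := nonsing_inv_mul S hSdet
  have hYS : ∀ i, Y i * S = S * Y i := fun i => commute_sqrt_aux hA (hcomm i)
  refine ⟨P * S⁻¹, ?_, ?_⟩
  · have hOt : (P * S⁻¹)ᵀ = S⁻¹ * Pᵀ := by
      rw [transpose_mul, transpose_nonsing_inv, hSsym]
    rw [hOt]
    calc P * S⁻¹ * (S⁻¹ * Pᵀ) = P * (S * S)⁻¹ * Pᵀ := by
          rw [Matrix.mul_inv_rev]; simp only [mul_assoc]
    _ = P * (P⁻¹ * (Pᵀ)⁻¹) * Pᵀ := by rw [hS2, hAdef, Matrix.mul_inv_rev]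
    _ = 1 := by
          simp only [← mul_assoc, hPP, one_mul]
          rw [nonsing_inv_mul _ hPtdet]
  · intro i
    have hOt : (P * S⁻¹)ᵀ = S⁻¹ * Pᵀ := by
      rw [transpose_mul, transpose_nonsing_inv, hSsym]
    rw [hOt]
    calc S⁻¹ * Pᵀ * X i * (P * S⁻¹)
        = S⁻¹ * (Y i * Pᵀ) * (P * S⁻¹) := by rw [mul_assoc S⁻¹, hPtX]
      _ = S⁻¹ * Y i * (Pᵀ * P) * S⁻¹ := by simp only [mul_assoc]
      _ = S⁻¹ * Y i * (S * S) * S⁻¹ := by rw [← hAdef, hS2]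
      _ = S⁻¹ * (Y i * S) * (S * S⁻¹) := by simp only [mul_assoc]
      _ = S⁻¹ * (S * Y i) := by rw [hYS, hSS, mul_one]
      _ = Y i := by rw [← mul_assoc, hSS', one_mul]
end

section
/- Let F be a field, n ≥ 1, and let S be a subsemigroup of the multiplicative semigroup of M_n(F) which is a group, i.e. there exists E ∈ S with E·X = X·E = X for all X ∈ S, and for every X ∈ S there exists Y ∈ S with X·Y = Y·X = E. Then there exist m ≤ n and an injective group homomorphism from S (with this group structure) into the general linear group GL_m(F). -/
open Matrix

/-- A subsemigroup `S` of `M_n(F)` which is a group (with some identity `E ∈ S`,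
not necessarily `I_n`) embeds, as a group, into `GL_m(F)` for some `m ≤ n`. -/
theorem subsemigroup_group_embeds_in_GL
    (F : Type*) [Field F] (n : ℕ)
    (S : Subsemigroup (Matrix (Fin n) (Fin n) F))
    (E : Matrix (Fin n) (Fin n) F) (hE : E ∈ S)
    (hid : ∀ X ∈ S, E * X = X ∧ X * E = X)
    (hinv : ∀ X ∈ S, ∃ Y ∈ S, X * Y = E ∧ Y * X = E) :
    ∃ m : ℕ, m ≤ n ∧ ∃ f : S → GL (Fin m) F,
      Function.Injective f ∧ ∀ a b : S, f (a * b) = f a * f b := by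
  classical
  have hEE : E * E = E := (hid E hE).1
  set V : Submodule F (Fin n → F) := LinearMap.range (Matrix.mulVecLin E) with hV
  have hmaps : ∀ X ∈ S, ∀ v ∈ V, (Matrix.mulVecLin X) v ∈ V := by
    rintro X hX v ⟨w, rfl⟩
    refine ⟨X.mulVec w, ?_⟩
    simp [Matrix.mulVecLin_apply, Matrix.mulVec_mulVec, (hid X hX).1, (hid X hX).2]
  set φ : S → Module.End F V := fun X =>
    (Matrix.mulVecLin X.1).restrict (fun v hv => hmaps X.1 X.2 v hv) with hφ
  have φmul : ∀ a b : S, φ (a * b) = φ a * φ b := by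
    intro a b
    apply LinearMap.ext; intro v; apply Subtype.ext
    simp [hφ, LinearMap.restrict_apply, Matrix.mulVecLin_mul, Module.End.mul_apply]
  have φE : ∀ h : E ∈ S, φ ⟨E, h⟩ = 1 := by
    intro h
    apply LinearMap.ext; rintro ⟨v, w, rfl⟩; apply Subtype.ext
    simp [hφ, LinearMap.restrict_apply, Matrix.mulVecLin_apply, Matrix.mulVec_mulVec, hEE]
  have φinj : Function.Injective φ := by
    intro a b h
    apply Subtype.ext
    have h1 : ∀ w, a.1.mulVec w = b.1.mulVec w := by
      intro w
      have hw : E.mulVec w ∈ V := ⟨w, rfl⟩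
      have := congrArg (fun g : Module.End F V => (g ⟨E.mulVec w, hw⟩ : Fin n → F)) h
      simp only [hφ, LinearMap.restrict_apply, Matrix.mulVecLin_apply] at this
      calc a.1.mulVec w = (a.1 * E).mulVec w := by rw [(hid a.1 a.2).2]
        _ = a.1.mulVec (E.mulVec w) := by rw [Matrix.mulVec_mulVec]
        _ = b.1.mulVec (E.mulVec w) := this
        _ = (b.1 * E).mulVec w := by rw [Matrix.mulVec_mulVec]
        _ = b.1.mulVec w := by rw [(hid b.1 b.2).2]
    have : Matrix.mulVecLin a.1 = Matrix.mulVecLin b.1 := LinearMap.ext h1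
    exact Matrix.toLin'.injective this
  choose Y hYS hXY hYX using fun X : S => hinv X.1 X.2
  have key : ∀ (a b : S), a.1 * b.1 = E → φ a * φ b = 1 := by
    intro a b hab
    rw [← φmul]
    have : a * b = ⟨E, hE⟩ := Subtype.ext hab
    rw [this, φE]
  set u : S → (Module.End F V)ˣ := fun X =>
    ⟨φ X, φ ⟨Y X, hYS X⟩, key X ⟨Y X, hYS X⟩ (hXY X), key ⟨Y X, hYS X⟩ X (hYX X)⟩ with hu
  have umul : ∀ a b : S, u (a * b) = u a * u b := fun a b => Units.ext (φmul a b)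
  have uinj : Function.Injective u := fun a b h => φinj (congrArg Units.val h)
  have : FiniteDimensional F V := inferInstance
  refine ⟨Module.finrank F V, ?_, ?_⟩
  · calc Module.finrank F V ≤ Module.finrank F (Fin n → F) := V.finrank_le
      _ = n := Module.finrank_fin_fun F
  · let b := Module.finBasis F V
    let e : Module.End F V ≃* Matrix (Fin (Module.finrank F V)) (Fin (Module.finrank F V)) F :=
      (LinearMap.toMatrixAlgEquiv b).toRingEquiv.toMulEquiv
    refine ⟨fun X => Units.mapEquiv e (u X), ?_, ?_⟩
    · intro a b h
      exact uinj ((Units.mapEquiv e).injective h)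
    · intro a b
      show Units.mapEquiv e (u (a * b)) = Units.mapEquiv e (u a) * Units.mapEquiv e (u b)
      rw [umul, _root_.map_mul]
end

section
/- Let F be a field and n, d, m, k ∈ ℕ, and let s₁,…,s_m and t₁,…,t_k be elements of the free group on d generators. Suppose that for every finite group G and every map g from the d generators to G: if the image of each s_j under the induced homomorphism FreeGroup (Fin d) → G equals 1, then the image of some t_i equals 1. Then the same holds in GL_n(F): for every map g from the d generators to GL_n(F), if each s_j maps to the identity under the induced homomorphism, then some t_i maps to the identity. (In other words, every universal sentence of group theory true in all finite groups is true in GL_n(F), hence in every linear group.) -/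
open Matrix

instance : IsJacobsonRing ℤ := by
  rw [isJacobsonRing_iff_prime_eq]
  intro P hP
  rcases eq_or_ne P ⊥ with rfl | hPb
  · refine le_antisymm ?_ Ideal.le_jacobson
    intro x hx
    rw [Ideal.mem_bot]
    by_contra hx0
    obtain ⟨p, hple, hp⟩ := Nat.exists_infinite_primes (x.natAbs + 1)
    have hmax : (Ideal.span {(p : ℤ)}).IsMaximal := by
      refine PrincipalIdealRing.isMaximal_of_irreducible ?_
      exact (Int.prime_iff_natAbs_prime.mpr (by simpa using hp)).irreducible
    have := Ideal.mem_sInf.mp hx ⟨bot_le, hmax⟩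
    rw [Ideal.mem_span_singleton] at this
    have hdvd : p ∣ x.natAbs := by
      have : ((p:ℤ)).natAbs ∣ x.natAbs := Int.natAbs_dvd_natAbs.mpr this
      simpa using this
    have := Nat.le_of_dvd (Int.natAbs_pos.mpr hx0) hdvd
    omega
  · have : P.IsMaximal := hP.isMaximal hPb
    exact Ideal.jacobson_eq_self_of_isMaximal

theorem finite_of_field_of_finite_int (κ : Type*) [Field κ] [Algebra.FiniteType ℤ κ] :
    Finite κ := by
  have hfin : Module.Finite ℤ κ := finite_of_finite_type_of_isJacobsonRing ℤ κ
  have hint : Algebra.IsIntegral ℤ κ := Algebra.IsIntegral.of_finite ℤ κ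
  rcases CharP.exists κ with ⟨p, hp⟩
  rcases CharP.char_is_prime_or_zero κ p with hprime | rfl
  · haveI : NeZero p := ⟨hprime.ne_zero⟩
    letI : Algebra (ZMod p) κ := ZMod.algebra κ p
    haveI : IsScalarTower ℤ (ZMod p) κ := by
      refine IsScalarTower.of_algebraMap_eq fun x => ?_
      have : (algebraMap (ZMod p) κ).comp (Int.castRingHom (ZMod p)) = algebraMap ℤ κ :=
        RingHom.ext_int _ _
      exact (congrFun (congrArg (·.toFun) this) x).symm
    haveI : Module.Finite (ZMod p) κ := Module.Finite.of_restrictScalars_finite ℤ (ZMod p) κ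
    exact Module.finite_of_finite (ZMod p)
  · exfalso
    haveI : CharZero κ := CharP.charP_to_charZero κ
    have h2 : IsIntegral ℤ ((Rat.castHom κ) 2⁻¹) := hint.isIntegral _
    have h2' : IsIntegral ℤ ((2 : ℚ)⁻¹) := by
      exact (isIntegral_algHom_iff ((Rat.castHom κ).toIntAlgHom) (Rat.cast_injective)).mp h2
    obtain ⟨z, hz⟩ := IsIntegrallyClosed.isIntegral_iff.mp h2'
    have : ((z : ℤ) : ℚ) = 2⁻¹ := hz
    have h1 : (2 : ℚ) * z = 1 := by rw [this]; norm_num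
    have : (2 : ℤ) * z = 1 := by exact_mod_cast h1
    omega

/-- Every universal sentence of group theory that holds in all finite groups
holds in `GL_n(F)`: if, in every finite group, whenever all the words `s j`
evaluate to `1`, some word `t i` evaluates to `1`, then the same implication
holds in `GL_n(F)`. -/
theorem GL_models_universal_theory_of_finite_groups
    (F : Type*) [Field F] (n d m k : ℕ)
    (s : Fin m → FreeGroup (Fin d)) (t : Fin k → FreeGroup (Fin d))
    (hfin : ∀ (G : Type) [Group G] [Finite G] (g : Fin d → G),
      (∀ j, FreeGroup.lift g (s j) = 1) → ∃ i, FreeGroup.lift g (t i) = 1) :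
    ∀ g : Fin d → GL (Fin n) F,
      (∀ j, FreeGroup.lift g (s j) = 1) → ∃ i, FreeGroup.lift g (t i) = 1 := by
    classical
  intro g hs
  by_contra hcon
  push_neg at hcon
  -- the finitely many matrix entries of the generators and their inverses
  set S : Set F := Set.range (fun x : Fin d × Fin n × Fin n × Bool =>
    if x.2.2.2 then ((g x.1 : Matrix (Fin n) (Fin n) F) x.2.1 x.2.2.1)
    else (((g x.1)⁻¹ : GL (Fin n) F) : Matrix (Fin n) (Fin n) F) x.2.1 x.2.2.1) with hS
  set R : Subalgebra ℤ F := Algebra.adjoin ℤ S with hR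
  haveI hRft : Algebra.FiniteType ℤ R := by
    rw [← Subalgebra.fg_iff_finiteType]
    exact Subalgebra.fg_def.mpr ⟨S, Set.finite_range _, rfl⟩
  have hmem1 : ∀ i p q, ((g i : Matrix (Fin n) (Fin n) F) p q) ∈ R := fun i p q =>
    Algebra.subset_adjoin ⟨(i, p, q, true), rfl⟩
  have hmem2 : ∀ i p q, (((g i)⁻¹ : GL (Fin n) F) : Matrix (Fin n) (Fin n) F) p q ∈ R :=
    fun i p q => Algebra.subset_adjoin ⟨(i, p, q, false), rfl⟩
  let B : Fin d → Matrix (Fin n) (Fin n) R := fun i p q => ⟨_, hmem1 i p q⟩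
  let C : Fin d → Matrix (Fin n) (Fin n) R := fun i p q => ⟨_, hmem2 i p q⟩
  let ρ : Matrix (Fin n) (Fin n) R →+* Matrix (Fin n) (Fin n) F :=
    (R.val.toRingHom).mapMatrix
  have hρentry : ∀ (M : Matrix (Fin n) (Fin n) R) p q, ρ M p q = (M p q : F) :=
    fun M p q => rfl
  have hρinj : Function.Injective ρ := by
    intro M N hMN
    refine Matrix.ext fun p q => Subtype.ext ?_
    exact congrFun (congrFun (congrArg (fun M => (M : Matrix (Fin n) (Fin n) F)) hMN) p) q
  have hρB : ∀ i, ρ (B i) = (g i : Matrix (Fin n) (Fin n) F) := fun i => by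
    ext p q; rfl
  have hρC : ∀ i, ρ (C i) = ((g i)⁻¹ : GL (Fin n) F) := fun i => by
    ext p q; rfl
  have hBC : ∀ i, B i * C i = 1 := fun i => by
    apply hρinj
    rw [_root_.map_mul, _root_.map_one, hρB, hρC]
    exact Units.mul_inv (g i)
  have hCB : ∀ i, C i * B i = 1 := fun i => by
    apply hρinj
    rw [_root_.map_mul, _root_.map_one, hρB, hρC]
    exact Units.inv_mul (g i)
  let h : Fin d → GL (Fin n) R := fun i => ⟨B i, C i, hBC i, hCB i⟩
  let φ : GL (Fin n) R →* GL (Fin n) F := Units.map ρ.toMonoidHom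
  have hφinj : Function.Injective φ := fun a b hab => Units.ext (hρinj (congrArg Units.val hab))
  have hφh : ∀ i, φ (h i) = g i := fun i => Units.ext (hρB i)
  have hcomp : φ.comp (FreeGroup.lift h) = FreeGroup.lift g := by
    apply FreeGroup.ext_hom
    intro a
    simp [hφh]
  -- the words s j are 1 over R, the words t i are not
  have hφlift : ∀ w, φ (FreeGroup.lift h w) = FreeGroup.lift g w := fun w => by
    simpa using DFunLike.congr_fun hcomp w
  have hsR : ∀ j, FreeGroup.lift h (s j) = 1 := by
    intro j
    apply hφinj
    rw [hφlift, hs j, _root_.map_one]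
  have htR : ∀ i, FreeGroup.lift h (t i) ≠ 1 := by
    intro i hti
    apply hcon i
    rw [← hφlift, hti, _root_.map_one]
  set M : Fin k → GL (Fin n) R := fun i => FreeGroup.lift h (t i) with hM
  -- pick an entry witnessing M i ≠ 1
  have hMne : ∀ i, ∃ pq : Fin n × Fin n,
      (M i : Matrix (Fin n) (Fin n) R) pq.1 pq.2 ≠ (1 : Matrix (Fin n) (Fin n) R) pq.1 pq.2 := by
    intro i
    by_contra hcon2
    push_neg at hcon2
    exact htR i (Units.ext (Matrix.ext fun p q => hcon2 (p, q)))
  choose pq hpq using hMne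
  let e : Fin k → R := fun i =>
    (M i : Matrix (Fin n) (Fin n) R) (pq i).1 (pq i).2 - (1 : Matrix (Fin n) (Fin n) R) (pq i).1 (pq i).2
  have he : ∀ i, e i ≠ 0 := fun i => sub_ne_zero.mpr (hpq i)
  let a : R := ∏ i, e i
  have ha : a ≠ 0 := Finset.prod_ne_zero_iff.mpr fun i _ => he i
  -- find a maximal ideal avoiding a
  haveI : IsJacobsonRing R := isJacobsonRing_of_finiteType (A := ℤ)
  have hbot : (⊥ : Ideal R).jacobson = ⊥ :=
    (inferInstance : IsJacobsonRing R).out Ideal.isRadical_bot_of_noZeroDivisors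
  have hamem : a ∉ (⊥ : Ideal R).jacobson := by rw [hbot]; simpa using ha
  rw [Ideal.jacobson, Ideal.mem_sInf] at hamem
  push_neg at hamem
  obtain ⟨I, ⟨-, hImax⟩, haI⟩ := hamem
  haveI : I.IsMaximal := hImax
  -- the finite residue field
  let κ := R ⧸ I
  letI : Field κ := Ideal.Quotient.field I
  haveI : Algebra.FiniteType ℤ κ :=
    Algebra.FiniteType.of_surjective (Ideal.Quotient.mkₐ ℤ I) (Ideal.Quotient.mkₐ_surjective ℤ I)
  haveI : Finite κ := @finite_of_field_of_finite_int κ _ this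
  let π : GL (Fin n) R →* GL (Fin n) κ :=
    Units.map ((Ideal.Quotient.mk I).mapMatrix).toMonoidHom
  let g' : Fin d → GL (Fin n) κ := fun i => π (h i)
  have hcomp' : π.comp (FreeGroup.lift h) = FreeGroup.lift g' := by
    apply FreeGroup.ext_hom
    intro x
    simp [g']
  have hπlift : ∀ w, π (FreeGroup.lift h w) = FreeGroup.lift g' w := fun w => by
    simpa using DFunLike.congr_fun hcomp' w
  -- transfer to a group in Type 0
  haveI : Finite (GL (Fin n) κ) := by
    haveI : Finite (Matrix (Fin n) (Fin n) κ) := by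
      unfold Matrix
      infer_instance
    exact Finite.of_injective Units.val fun _ _ h => Units.ext h
  letI : Fintype (GL (Fin n) κ) := Fintype.ofFinite _
  haveI : Small.{0} (GL (Fin n) κ) :=
    ⟨Fin (Fintype.card (GL (Fin n) κ)), ⟨Fintype.equivFin _⟩⟩
  let G := Shrink.{0} (GL (Fin n) κ)
  haveI : Finite G := Finite.of_equiv _ (equivShrink (GL (Fin n) κ))
  let ψ : G ≃* GL (Fin n) κ := Shrink.mulEquiv
  let g'' : Fin d → G := fun i => ψ.symm (g' i)
  have hcomp'' : (ψ.symm.toMonoidHom.comp (FreeGroup.lift g')) = FreeGroup.lift g'' := by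
    apply FreeGroup.ext_hom
    intro x
    simp [g'']
  have hs'' : ∀ j, FreeGroup.lift g'' (s j) = 1 := by
    intro j
    rw [← hcomp'']
    have : FreeGroup.lift g' (s j) = 1 := by
      rw [← hcomp']
      simp [hsR j]
    simp [this]
  obtain ⟨i, hi⟩ := hfin G g'' hs''
  -- pull back: lift g' (t i) = 1
  have hgt : FreeGroup.lift g' (t i) = 1 := by
    rw [← hcomp''] at hi
    have := congrArg ψ hi
    simpa using this
  have hMt : π (M i) = 1 := by
    rw [hM, hπlift, hgt]
  -- extract the entry equation
  have hentry : Ideal.Quotient.mk I (e i) = 0 := by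
    have hmat := congrArg Units.val hMt
    have := congrFun (congrFun hmat (pq i).1) (pq i).2
    have h1 : ((1 : GL (Fin n) κ) : Matrix (Fin n) (Fin n) κ) (pq i).1 (pq i).2
        = (Ideal.Quotient.mk I) ((1 : Matrix (Fin n) (Fin n) R) (pq i).1 (pq i).2) := by
      rw [Units.val_one]
      have : ((Ideal.Quotient.mk I).mapMatrix (1 : Matrix (Fin n) (Fin n) R)) = 1 := map_one _
      rw [← this]
      rfl
    rw [h1] at this
    have : (Ideal.Quotient.mk I) ((M i : Matrix (Fin n) (Fin n) R) (pq i).1 (pq i).2)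
        = (Ideal.Quotient.mk I) ((1 : Matrix (Fin n) (Fin n) R) (pq i).1 (pq i).2) := this
    show Ideal.Quotient.mk I ((M i : Matrix (Fin n) (Fin n) R) (pq i).1 (pq i).2
      - (1 : Matrix (Fin n) (Fin n) R) (pq i).1 (pq i).2) = 0
    rw [RingHom.map_sub, sub_eq_zero]
    exact this
  have heI : e i ∈ I := Ideal.Quotient.eq_zero_iff_mem.mp hentry
  -- a is a multiple of e i, so a ∈ I, contradiction
  have hdvd : e i ∣ a := Finset.dvd_prod_of_mem e (Finset.mem_univ i)
  obtain ⟨c, hc⟩ := hdvd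
  exact haI (hc ▸ Ideal.mul_mem_right c I heI)
end

section
/- Let X₁ = diag(1,2,2) and X₂ = diag(1,1,2) be diagonal matrices in M₃(ℚ). Then there do not exist a field Ω and unital ring homomorphisms ε, δ : M₃(ℚ) → M₃(Ω) such that ε(X₁) = δ(X₂). (In particular, the inclusion of the subring generated by X₁ and the homomorphism sending X₁ to X₂ cannot be amalgamated into any matrix ring M₃(Ω).) -/
open Matrix FiniteDimensional

section Aux

variable {Ω : Type} [Field Ω]

namespace NoAmalgAux

/-- rank of `B*C*D` is at most rank of `C`. -/
lemma rank_le_of_eq_mul {A B C D : Matrix (Fin 3) (Fin 3) Ω}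
    (h : A = B * C * D) : A.rank ≤ C.rank := by
  rw [h]
  calc (B * C * D).rank ≤ (B * C).rank := Matrix.rank_mul_le_left _ _
    _ ≤ C.rank := Matrix.rank_mul_le_right _ _

lemma range_le_of_mul_eq {A : Matrix (Fin 3) (Fin 3) Ω} (C : Matrix (Fin 3) (Fin 3) Ω)
    (h : C * A = A) : LinearMap.range A.mulVecLin ≤ LinearMap.range C.mulVecLin := by
  rintro x ⟨a, rfl⟩
  refine ⟨A.mulVecLin a, ?_⟩
  have h2 := congrArg Matrix.mulVecLin h
  rw [Matrix.mulVecLin_mul] at h2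
  exact LinearMap.congr_fun h2 a

/-- The rank of a sum of two orthogonal idempotents is at least the sum of ranks. -/
lemma rank_add_of_orthogonal {A B : Matrix (Fin 3) (Fin 3) Ω}
    (hA : A * A = A) (hB : B * B = B) (hAB : A * B = 0) (hBA : B * A = 0) :
    A.rank + B.rank ≤ (A + B).rank := by
  have hA' : LinearMap.range A.mulVecLin ≤ LinearMap.range (A + B).mulVecLin :=
    range_le_of_mul_eq _ (by rw [add_mul, hA, hBA, add_zero])
  have hB' : LinearMap.range B.mulVecLin ≤ LinearMap.range (A + B).mulVecLin :=
    range_le_of_mul_eq _ (by rw [add_mul, hB, hAB, zero_add])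
  have hdisj : LinearMap.range A.mulVecLin ⊓ LinearMap.range B.mulVecLin = ⊥ := by
    rw [Submodule.eq_bot_iff]
    rintro x ⟨⟨a, ha⟩, ⟨b, hb⟩⟩
    have h1 : A.mulVecLin x = x := by
      rw [← ha, ← LinearMap.comp_apply, ← Matrix.mulVecLin_mul, hA, ha]
    have h2 : A.mulVecLin x = 0 := by
      rw [← hb, ← LinearMap.comp_apply, ← Matrix.mulVecLin_mul, hAB]
      simp
    rw [h1] at h2; exact h2
  have key := Submodule.finrank_sup_add_finrank_inf_eq
    (LinearMap.range A.mulVecLin) (LinearMap.range B.mulVecLin)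
  rw [hdisj, finrank_bot, add_zero] at key
  have hsup : LinearMap.range A.mulVecLin ⊔ LinearMap.range B.mulVecLin
      ≤ LinearMap.range (A + B).mulVecLin := sup_le hA' hB'
  calc A.rank + B.rank
      = Module.finrank Ω ↥(LinearMap.range A.mulVecLin ⊔ LinearMap.range B.mulVecLin) := key.symm
    _ ≤ (A + B).rank := Submodule.finrank_mono hsup

lemma rank_add_le' (A B : Matrix (Fin 3) (Fin 3) Ω) :
    (A + B).rank ≤ A.rank + B.rank := by
  have hsub : LinearMap.range (A + B).mulVecLin
      ≤ LinearMap.range A.mulVecLin ⊔ LinearMap.range B.mulVecLin := by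
    rintro x ⟨a, rfl⟩
    rw [Matrix.mulVecLin_add, LinearMap.add_apply]
    exact Submodule.add_mem_sup ⟨a, rfl⟩ ⟨a, rfl⟩
  calc (A + B).rank
      ≤ Module.finrank Ω ↥(LinearMap.range A.mulVecLin ⊔ LinearMap.range B.mulVecLin) :=
        Submodule.finrank_mono hsub
    _ ≤ A.rank + B.rank := Submodule.finrank_add_le_finrank_add_finrank _ _

end NoAmalgAux

end Aux

open NoAmalgAux in
/-- The diagonal matrices `X₁ = diag(1,2,2)` and `X₂ = diag(1,1,2)` in `M₃(ℚ)`
cannot be amalgamated: there is no field `Ω` with unital ring homomorphisms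
`ε, δ : M₃(ℚ) → M₃(Ω)` such that `ε X₁ = δ X₂`. -/
theorem no_amalgamation_diagonal_matrices :
    ¬ ∃ (Ω : Type) (_ : Field Ω)
        (ε δ : Matrix (Fin 3) (Fin 3) ℚ →+* Matrix (Fin 3) (Fin 3) Ω),
      ε (Matrix.diagonal ![1, 2, 2]) = δ (Matrix.diagonal ![1, 1, 2]) := by
  rintro ⟨Ω, _, ε, δ, h⟩
  classical
  -- matrix units
  set E : Fin 3 → Fin 3 → Matrix (Fin 3) (Fin 3) ℚ := fun i j => single i j 1 with hE
  have hmul : ∀ i j k l, E i j * E k l = if j = k then E i l else 0 := by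
    intro i j k l
    by_cases hjk : j = k
    · subst hjk
      simp [hE, Matrix.single_mul_single_same]
    · simp [hE, hjk, Matrix.single_mul_single_of_ne]
  have hone : E 0 0 + E 1 1 + E 2 2 = 1 := by
    ext i j
    fin_cases i <;> fin_cases j <;>
      simp [hE, Matrix.single, Matrix.one_apply]
  -- generic facts about images of matrix units under a ring hom
  have key : ∀ (f : Matrix (Fin 3) (Fin 3) ℚ →+* Matrix (Fin 3) (Fin 3) Ω) (i : Fin 3),
      (f (E i i)).rank = 1 := by
    intro f i
    have hidem : ∀ i : Fin 3, f (E i i) * f (E i i) = f (E i i) := by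
      intro i; rw [← _root_.map_mul, hmul]; simp
    have horth : ∀ i j : Fin 3, i ≠ j → f (E i i) * f (E j j) = 0 := by
      intro i j hij
      rw [← _root_.map_mul, hmul, if_neg hij, _root_.map_zero]
    have hreq : ∀ i j : Fin 3, (f (E i i)).rank ≤ (f (E j j)).rank := by
      intro i j
      refine rank_le_of_eq_mul (B := f (E i j)) (D := f (E j i)) ?_
      rw [← _root_.map_mul, ← _root_.map_mul, hmul, if_pos rfl, hmul, if_pos rfl]
    have hrank_eq : ∀ i j : Fin 3, (f (E i i)).rank = (f (E j j)).rank :=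
      fun i j => le_antisymm (hreq i j) (hreq j i)
    -- ranks sum to 3
    have hsum1 : f (E 0 0) + f (E 1 1) + f (E 2 2) = 1 := by
      rw [← _root_.map_add, ← _root_.map_add, hone, _root_.map_one]
    have h01idem : (f (E 0 0) + f (E 1 1)) * (f (E 0 0) + f (E 1 1))
        = f (E 0 0) + f (E 1 1) := by
      rw [add_mul, mul_add, mul_add, hidem 0, hidem 1,
        horth 0 1 (by decide), horth 1 0 (by decide)]
      abel
    have h012 : (f (E 0 0) + f (E 1 1)) * f (E 2 2) = 0 := by
      rw [add_mul, horth 0 2 (by decide), horth 1 2 (by decide), add_zero]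
    have h210 : f (E 2 2) * (f (E 0 0) + f (E 1 1)) = 0 := by
      rw [mul_add, horth 2 0 (by decide), horth 2 1 (by decide), add_zero]
    have hge : (f (E 0 0)).rank + (f (E 1 1)).rank + (f (E 2 2)).rank ≤ 3 := by
      have g1 : (f (E 0 0)).rank + (f (E 1 1)).rank ≤ (f (E 0 0) + f (E 1 1)).rank :=
        rank_add_of_orthogonal (hidem 0) (hidem 1)
          (horth 0 1 (by decide)) (horth 1 0 (by decide))
      have g2 : (f (E 0 0) + f (E 1 1)).rank + (f (E 2 2)).rank
          ≤ (f (E 0 0) + f (E 1 1) + f (E 2 2)).rank :=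
        rank_add_of_orthogonal h01idem (hidem 2) h012 h210
      have g3 : (f (E 0 0) + f (E 1 1) + f (E 2 2)).rank = 3 := by
        rw [hsum1, Matrix.rank_one, Fintype.card_fin]
      omega
    have hle : 3 ≤ (f (E 0 0)).rank + (f (E 1 1)).rank + (f (E 2 2)).rank := by
      have g1 : (f (E 0 0) + f (E 1 1) + f (E 2 2)).rank
          ≤ (f (E 0 0) + f (E 1 1)).rank + (f (E 2 2)).rank := rank_add_le' _ _
      have g2 : (f (E 0 0) + f (E 1 1)).rank ≤ (f (E 0 0)).rank + (f (E 1 1)).rank :=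
        rank_add_le' _ _
      have g3 : (f (E 0 0) + f (E 1 1) + f (E 2 2)).rank = 3 := by
        rw [hsum1, Matrix.rank_one, Fintype.card_fin]
      omega
    have r01 := hrank_eq 0 1
    have r02 := hrank_eq 0 2
    have ri := hrank_eq i 0
    omega
  -- the amalgamated idempotent
  have hX1 : (Matrix.diagonal ![1, 2, 2] : Matrix (Fin 3) (Fin 3) ℚ) - 1 = E 1 1 + E 2 2 := by
    ext i j
    fin_cases i <;> fin_cases j <;>
      simp [hE, Matrix.single, Matrix.one_apply, Matrix.diagonal] <;> norm_num
  have hX2 : (Matrix.diagonal ![1, 1, 2] : Matrix (Fin 3) (Fin 3) ℚ) - 1 = E 2 2 := by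
    ext i j
    fin_cases i <;> fin_cases j <;>
      simp [hE, Matrix.single, Matrix.one_apply, Matrix.diagonal] <;> norm_num
  have hP : ε (E 1 1) + ε (E 2 2) = δ (E 2 2) := by
    have h2 : ε (Matrix.diagonal ![1, 2, 2] - 1) = δ (Matrix.diagonal ![1, 1, 2] - 1) := by
      rw [_root_.map_sub, _root_.map_sub, _root_.map_one, _root_.map_one, h]
    rw [hX1, hX2, _root_.map_add] at h2
    exact h2
  -- rank contradiction
  have hidemε : ∀ i : Fin 3, ε (E i i) * ε (E i i) = ε (E i i) := by
    intro i; rw [← _root_.map_mul, hmul]; simp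
  have horthε : ∀ i j : Fin 3, i ≠ j → ε (E i i) * ε (E j j) = 0 := by
    intro i j hij; rw [← _root_.map_mul, hmul, if_neg hij, _root_.map_zero]
  have h2le : (ε (E 1 1)).rank + (ε (E 2 2)).rank ≤ (ε (E 1 1) + ε (E 2 2)).rank :=
    rank_add_of_orthogonal (hidemε 1) (hidemε 2)
      (horthε 1 2 (by decide)) (horthε 2 1 (by decide))
  rw [hP, key δ 2, key ε 1, key ε 2] at h2le
  omega
end

section
/- Let X₁ = E₁₂ + E₃₄ and X₂ = E₁₂ in M₄(ℚ), where E_{ij} denotes the standard matrix unit. Then there do not exist a field Ω and unital ring homomorphisms ε, δ : M₄(ℚ) → M₄(Ω) such that ε(X₁) = δ(X₂). (In particular, the inclusion of the subring generated by X₁ and the homomorphism sending X₁ to X₂ cannot be amalgamated into any matrix ring M₄(Ω).) -/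
open Matrix

/-- trace of an idempotent matrix equals its rank (cast). -/
lemma trace_eq_rank_of_idem {n : Type*} [Fintype n] [DecidableEq n] {Ω : Type*} [Field Ω]
    (h : Matrix n n Ω) (hh : h * h = h) : h.trace = (h.rank : Ω) := by
  have hcomp : h.mulVecLin ∘ₗ h.mulVecLin = h.mulVecLin := by
    rw [← Matrix.mulVecLin_mul, hh]
  have hproj : LinearMap.IsProj (LinearMap.range h.mulVecLin) h.mulVecLin := by
    constructor
    · intro x; exact ⟨x, rfl⟩
    · rintro x ⟨y, rfl⟩
      exact DFunLike.congr_fun hcomp y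
  have htr := hproj.trace
  rw [Matrix.rank, ← htr, LinearMap.trace_eq_matrix_trace Ω (Pi.basisFun Ω n),
    LinearMap.toMatrix_eq_toMatrix', ← Matrix.toLin'_apply',
    LinearMap.toMatrix'_toLin']

/-- The nilpotent matrices `X₁ = E₁₂ + E₃₄` and `X₂ = E₁₂` in `M₄(ℚ)` cannot be
amalgamated: there is no field `Ω` with unital ring homomorphisms
`ε, δ : M₄(ℚ) → M₄(Ω)` such that `ε X₁ = δ X₂`. -/
theorem no_amalgamation_nilpotent_matrices :
    ¬ ∃ (Ω : Type) (_ : Field Ω)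
        (ε δ : Matrix (Fin 4) (Fin 4) ℚ →+* Matrix (Fin 4) (Fin 4) Ω),
      ε (Matrix.single 0 1 (1 : ℚ) + Matrix.single 2 3 (1 : ℚ)) =
        δ (Matrix.single 0 1 (1 : ℚ)) := by
  rintro ⟨Ω, _, ε, δ, key⟩
  classical
  set E : Fin 4 → Fin 4 → Matrix (Fin 4) (Fin 4) ℚ :=
    fun i j => Matrix.single i j (1 : ℚ) with hE
  -- Ω has characteristic zero
  have hnz : ∀ n : ℕ, n ≠ 0 → (n : Ω) ≠ 0 := by
    intro n hn h0
    have hu : IsUnit (n : Matrix (Fin 4) (Fin 4) ℚ) := by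
      have := (isUnit_iff_ne_zero.2 (show ((n : ℚ)) ≠ 0 by exact_mod_cast hn)).map
        (algebraMap ℚ (Matrix (Fin 4) (Fin 4) ℚ))
      rwa [map_natCast] at this
    have hu2 := hu.map δ
    rw [map_natCast] at hu2
    have hzero : (n : Matrix (Fin 4) (Fin 4) Ω) = 0 := by
      rw [← Matrix.diagonal_natCast]
      have : (fun _ : Fin 4 => (n : Ω)) = fun _ => (0 : Ω) := by funext; exact h0
      rw [this, Matrix.diagonal_zero]
    rw [hzero] at hu2
    exact not_isUnit_zero hu2
  have hchar : CharZero Ω := by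
    refine ⟨fun a b hab => ?_⟩
    by_contra hne
    rcases Nat.lt_or_ge a b with hlt | hge
    · exact hnz (b - a) (by omega) (by push_cast [Nat.cast_sub hlt.le]; rw [hab]; ring)
    · have hlt : b < a := lt_of_le_of_ne hge (fun h => hne h.symm)
      exact hnz (a - b) (by omega) (by push_cast [Nat.cast_sub hlt.le]; rw [hab]; ring)
  -- matrix unit identities
  have hsum : E 0 0 + E 1 1 + E 2 2 + E 3 3 = 1 := by
    ext i j
    fin_cases i <;> fin_cases j <;>
      simp [hE, Matrix.single, Matrix.one_apply]
  have traceδ : ∀ i : Fin 4, (δ (E i i)).trace = (δ (E 0 0)).trace := by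
    intro i
    have h1 : E i i = E i 0 * E 0 i := by simp [hE]
    have h2 : E 0 0 = E 0 i * E i 0 := by simp [hE]
    rw [h1, h2, _root_.map_mul, _root_.map_mul, Matrix.trace_mul_comm]
  have traceε : ∀ i : Fin 4, (ε (E i i)).trace = (ε (E 0 0)).trace := by
    intro i
    have h1 : E i i = E i 0 * E 0 i := by simp [hE]
    have h2 : E 0 0 = E 0 i * E i 0 := by simp [hE]
    rw [h1, h2, _root_.map_mul, _root_.map_mul, Matrix.trace_mul_comm]
  have trace_one4 : (1 : Matrix (Fin 4) (Fin 4) Ω).trace = 4 := by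
    rw [Matrix.trace_one]; norm_num
  have sumδ : (4 : Ω) * (δ (E 0 0)).trace = 4 := by
    have h := congrArg (fun M => Matrix.trace (δ M)) hsum
    simp only [map_add, _root_.map_one, Matrix.trace_add, trace_one4] at h
    rw [traceδ 1, traceδ 2, traceδ 3] at h
    linear_combination h
  have sumε : (4 : Ω) * (ε (E 0 0)).trace = 4 := by
    have h := congrArg (fun M => Matrix.trace (ε M)) hsum
    simp only [map_add, _root_.map_one, Matrix.trace_add, trace_one4] at h
    rw [traceε 1, traceε 2, traceε 3] at h
    linear_combination h
  -- the key elements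
  set e : Matrix (Fin 4) (Fin 4) Ω := δ (E 0 0) with he
  set Z : Matrix (Fin 4) (Fin 4) Ω := δ (E 0 1) with hZ
  set P : Matrix (Fin 4) (Fin 4) Ω := ε (E 0 0 + E 2 2) with hP
  have he_idem : e * e = e := by
    rw [he, ← _root_.map_mul]; congr 1; simp [hE]
  have hP_idem : P * P = P := by
    rw [hP, ← _root_.map_mul]; congr 1
    ext i j
    fin_cases i <;> fin_cases j <;>
      simp [hE, Matrix.mul_apply, Matrix.single, Fin.sum_univ_four]
  have heZ : e * Z = Z := by
    rw [he, hZ, ← _root_.map_mul]; congr 1; simp [hE]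
  have hkey' : Z = ε (E 0 1 + E 2 3) := key.symm
  have hZU : Z * ε (E 1 0 + E 3 2) = P := by
    rw [hkey', ← _root_.map_mul, hP]
    congr 1
    ext i j
    fin_cases i <;> fin_cases j <;>
      simp [hE, Matrix.mul_apply, Matrix.single, Fin.sum_univ_four]
  have heP : e * P = P := by rw [← hZU, ← mul_assoc, heZ]
  have hrank_le : P.rank ≤ e.rank := by
    conv_lhs => rw [← heP]
    exact Matrix.rank_mul_le_left e P
  have htre : e.trace = (e.rank : Ω) := trace_eq_rank_of_idem e he_idem
  have htrP : P.trace = (P.rank : Ω) := trace_eq_rank_of_idem P hP_idem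
  have h4e : (4 * e.rank : ℕ) = 4 := by
    have : ((4 * e.rank : ℕ) : Ω) = ((4 : ℕ) : Ω) := by
      push_cast
      rw [← htre, he]
      calc (4 : Ω) * (δ (E 0 0)).trace = 4 := sumδ
        _ = ((4 : ℕ) : Ω) := by norm_num
    exact_mod_cast this
  have h2P : (2 * P.rank : ℕ) = 4 := by
    have hPtr : P.trace = 2 * (ε (E 0 0)).trace := by
      rw [hP, map_add, Matrix.trace_add, traceε 2]
      ring
    have : ((2 * P.rank : ℕ) : Ω) = ((4 : ℕ) : Ω) := by
      push_cast
      rw [← htrP, hPtr]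
      calc 2 * (2 * (ε (E 0 0)).trace) = 4 * (ε (E 0 0)).trace := by ring
        _ = 4 := sumε
        _ = ((4 : ℕ) : Ω) := by norm_num
    exact_mod_cast this
  omega
end
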